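/- Let μ < 0, let I be a nonempty finite index set with probability weights w_i > 0 satisfying Σ_i w_i = 1, and for each i ∈ I and each coordinate j ∈ {1,…,n} let a_{ij} ≥ 0 and g_{ij} ≥ 0 be constants. Define r_i(p) = Σ_j a_{ij} · log(1 + p_j · g_{ij}) for p in the nonnegative orthant {p ∈ ℝ^n : p_j ≥ 0 for all j}. Then the function G(p) = (1/μ)·log(Σ_{i∈I} w_i · exp(μ · r_i(p))) is concave on the nonnegative orthant. -/

import Mathlib

open Real Finset

private lemma log_concave_pt {x y t s : ℝ} (hx : 0 < x) (hy : 0 < y)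
    (ht : 0 ≤ t) (hs : 0 ≤ s) (hts : t + s = 1) :
    t * Real.log x + s * Real.log y ≤ Real.log (t * x + s * y) := by
  have := strictConcaveOn_log_Ioi.concaveOn.2 (Set.mem_Ioi.2 hx) (Set.mem_Ioi.2 hy) ht hs hts
  simpa [smul_eq_mul] using this

/-- Weighted Hölder: `∑ w x^t y^s ≤ (∑ w x)^t (∑ w y)^s` for positive data. -/
private lemma holder_weighted {I : Type*} [Fintype I] [Nonempty I]
    (w x y : I → ℝ) (hw : ∀ i, 0 < w i)
    (hx : ∀ i, 0 < x i) (hy : ∀ i, 0 < y i)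
    {t s : ℝ} (ht : 0 ≤ t) (hs : 0 ≤ s) (hts : t + s = 1) :
    ∑ i, w i * (x i ^ t * y i ^ s) ≤ (∑ i, w i * x i) ^ t * (∑ i, w i * y i) ^ s := by
  set X := ∑ i, w i * x i with hX
  set Y := ∑ i, w i * y i with hY
  have hXpos : 0 < X := Finset.sum_pos (fun i _ => mul_pos (hw i) (hx i)) univ_nonempty
  have hYpos : 0 < Y := Finset.sum_pos (fun i _ => mul_pos (hw i) (hy i)) univ_nonempty
  have key : ∀ i, w i * (x i ^ t * y i ^ s) ≤
      X ^ t * Y ^ s * (w i * (t * (x i / X) + s * (y i / Y))) := by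
    intro i
    have hamgm := Real.geom_mean_le_arith_mean2_weighted ht hs
      (le_of_lt (div_pos (hx i) hXpos)) (le_of_lt (div_pos (hy i) hYpos)) hts
    have hdecomp : x i ^ t * y i ^ s = X ^ t * Y ^ s * ((x i / X) ^ t * (y i / Y) ^ s) := by
      rw [Real.div_rpow (hx i).le hXpos.le, Real.div_rpow (hy i).le hYpos.le]
      field_simp
    rw [hdecomp]
    have h2 : X ^ t * Y ^ s * ((x i / X) ^ t * (y i / Y) ^ s) ≤
        X ^ t * Y ^ s * (t * (x i / X) + s * (y i / Y)) := by
      apply mul_le_mul_of_nonneg_left hamgm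
      positivity
    calc w i * (X ^ t * Y ^ s * ((x i / X) ^ t * (y i / Y) ^ s))
        ≤ w i * (X ^ t * Y ^ s * (t * (x i / X) + s * (y i / Y))) :=
          mul_le_mul_of_nonneg_left h2 (hw i).le
      _ = X ^ t * Y ^ s * (w i * (t * (x i / X) + s * (y i / Y))) := by ring
  calc ∑ i, w i * (x i ^ t * y i ^ s)
      ≤ ∑ i, X ^ t * Y ^ s * (w i * (t * (x i / X) + s * (y i / Y))) :=
        Finset.sum_le_sum fun i _ => key i
    _ = X ^ t * Y ^ s * (t * ((∑ i, w i * x i) / X) + s * ((∑ i, w i * y i) / Y)) := by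
        rw [← Finset.mul_sum]
        congr 1
        rw [Finset.sum_div, Finset.sum_div, Finset.mul_sum, Finset.mul_sum, ← Finset.sum_add_distrib]
        refine Finset.sum_congr rfl fun i _ => ?_
        field_simp
    _ = X ^ t * Y ^ s := by
        rw [← hX, ← hY, div_self hXpos.ne', div_self hYpos.ne']
        rw [mul_one, mul_one, hts, mul_one]

/-- For μ < 0, probability weights `w i > 0` summing to 1, and
rates `r i p = ∑ j, a i j * log (1 + p j * g i j)` with nonnegative constants
`a i j ≥ 0`, `g i j ≥ 0`, the entropic utility
`G p = (1/μ) * log (∑ i, w i * exp (μ * r i p))` is concave on the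
nonnegative orthant. -/
theorem stmt_1 {n : ℕ} {I : Type*} [Fintype I] [Nonempty I]
    (μ : ℝ) (hμ : μ < 0)
    (w : I → ℝ) (hw : ∀ i, 0 < w i) (hsum : ∑ i, w i = 1)
    (a g : I → Fin n → ℝ)
    (ha : ∀ i j, 0 ≤ a i j) (hg : ∀ i j, 0 ≤ g i j) :
    ConcaveOn ℝ {p : Fin n → ℝ | ∀ j, 0 ≤ p j}
      (fun p : Fin n → ℝ =>
        (1 / μ) * Real.log (∑ i, w i *
          Real.exp (μ * ∑ j, a i j * Real.log (1 + p j * g i j)))) := by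
  set r : I → (Fin n → ℝ) → ℝ := fun i p => ∑ j, a i j * Real.log (1 + p j * g i j) with hr
  constructor
  · intro p hp q hq t s ht hs hts j
    simp only [Pi.add_apply, Pi.smul_apply, smul_eq_mul]
    have := hp j; have := hq j
    positivity
  · intro p hp q hq t s ht hs hts
    -- concavity of each r i
    have hrconc : ∀ i, t * r i p + s * r i q ≤ r i (t • p + s • q) := by
      intro i
      rw [hr]
      simp only
      rw [Finset.mul_sum, Finset.mul_sum, ← Finset.sum_add_distrib]
      refine Finset.sum_le_sum fun j _ => ?_
      have hxp : (0:ℝ) < 1 + p j * g i j := by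
        have := mul_nonneg (hp j) (hg i j); linarith
      have hxq : (0:ℝ) < 1 + q j * g i j := by
        have := mul_nonneg (hq j) (hg i j); linarith
      have hlog := log_concave_pt hxp hxq ht hs hts
      have harg : t * (1 + p j * g i j) + s * (1 + q j * g i j)
          = 1 + (t • p + s • q) j * g i j := by
        simp only [Pi.add_apply, Pi.smul_apply, smul_eq_mul]
        nlinarith [hts]
      rw [harg] at hlog
      calc t * (a i j * Real.log (1 + p j * g i j)) + s * (a i j * Real.log (1 + q j * g i j))
          = a i j * (t * Real.log (1 + p j * g i j) + s * Real.log (1 + q j * g i j)) := by ring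
        _ ≤ a i j * Real.log (1 + (t • p + s • q) j * g i j) :=
            mul_le_mul_of_nonneg_left hlog (ha i j)
    -- exponential step
    have hexp : ∀ i, Real.exp (μ * r i (t • p + s • q)) ≤
        Real.exp (μ * r i p) ^ t * Real.exp (μ * r i q) ^ s := by
      intro i
      have h1 : μ * r i (t • p + s • q) ≤ μ * (t * r i p + s * r i q) :=
        mul_le_mul_of_nonpos_left (hrconc i) hμ.le
      have h2 : Real.exp (μ * (t * r i p + s * r i q))
          = Real.exp (μ * r i p) ^ t * Real.exp (μ * r i q) ^ s := by
        rw [← Real.exp_mul (μ * r i p) t, ← Real.exp_mul (μ * r i q) s, ← Real.exp_add]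
        ring_nf
      rw [← h2]
      exact Real.exp_le_exp.2 h1
    set X := ∑ i, w i * Real.exp (μ * r i p) with hX
    set Y := ∑ i, w i * Real.exp (μ * r i q) with hY
    have hXpos : 0 < X := Finset.sum_pos (fun i _ => mul_pos (hw i) (Real.exp_pos _)) univ_nonempty
    have hYpos : 0 < Y := Finset.sum_pos (fun i _ => mul_pos (hw i) (Real.exp_pos _)) univ_nonempty
    have hS : ∑ i, w i * Real.exp (μ * r i (t • p + s • q)) ≤ X ^ t * Y ^ s := by
      calc ∑ i, w i * Real.exp (μ * r i (t • p + s • q))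
          ≤ ∑ i, w i * (Real.exp (μ * r i p) ^ t * Real.exp (μ * r i q) ^ s) :=
            Finset.sum_le_sum fun i _ => mul_le_mul_of_nonneg_left (hexp i) (hw i).le
        _ ≤ X ^ t * Y ^ s :=
            holder_weighted w _ _ hw (fun i => Real.exp_pos _) (fun i => Real.exp_pos _) ht hs hts
    have hSpos : 0 < ∑ i, w i * Real.exp (μ * r i (t • p + s • q)) :=
      Finset.sum_pos (fun i _ => mul_pos (hw i) (Real.exp_pos _)) univ_nonempty
    have hlog : Real.log (∑ i, w i * Real.exp (μ * r i (t • p + s • q)))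
        ≤ t * Real.log X + s * Real.log Y := by
      calc Real.log (∑ i, w i * Real.exp (μ * r i (t • p + s • q)))
          ≤ Real.log (X ^ t * Y ^ s) := Real.log_le_log hSpos hS
        _ = t * Real.log X + s * Real.log Y := by
            rw [Real.log_mul (by positivity) (by positivity),
              Real.log_rpow hXpos, Real.log_rpow hYpos]
      done
    have hinv : (1:ℝ)/μ < 0 := one_div_neg.2 hμ
    simp only [smul_eq_mul]
    have := mul_le_mul_of_nonpos_left hlog hinv.le
    nlinarith [this]
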